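/- Let G = (V,E) be an undirected graph on n vertices, let F_1, …, F_m be a maximal spanning forest decomposition (msfd) of order m of G, let k be an integer with 1 ≤ k ≤ m, and let G_k = (V, F_1 ∪ … ∪ F_k). Then G_k is a sparse k-connectivity certificate of G; that is, (1) G_k has at most k(n−1) edges, and (2) for every nonempty proper subset S ⊂ V with λ(S,G) ≤ k, every edge of E_G(S, V∖S) belongs to G_k. -/

import Mathlib

/-- The size of the edge cut `E_G(S, V∖S)`: the number of edges of `G` with one
endpoint in `S` and the other in `Sᶜ`. -/
noncomputable def cutSize {V : Type*} (G : SimpleGraph V) (S : Set V) : ℕ :=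
  {e ∈ G.edgeSet | ∃ u ∈ S, ∃ v ∈ Sᶜ, e = s(u, v)}.ncard

/-- `F` is a maximal spanning forest of `H`: a subforest of `H` such that the endpoints of
every edge of `H` lie in the same component of `F`. -/
def IsMaxSpanningForest {V : Type*} (H F : SimpleGraph V) : Prop :=
  F ≤ H ∧ F.IsAcyclic ∧ ∀ u v : V, H.Adj u v → F.Reachable u v

/-- `F 1, …, F m` is a maximal spanning forest decomposition of order `m` of `G`:
the forests are edge-disjoint, their union is `G`, and each `F i` is a maximal spanning
forest of `G \ (F 1 ∪ … ∪ F (i-1))`. -/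
def IsMSFD {V : Type*} (G : SimpleGraph V) (m : ℕ) (F : ℕ → SimpleGraph V) : Prop :=
  (⨆ i ∈ Finset.Icc 1 m, F i) = G ∧
  (∀ i ∈ Finset.Icc 1 m, ∀ j ∈ Finset.Icc 1 m, i ≠ j → Disjoint (F i) (F j)) ∧
  ∀ i ∈ Finset.Icc 1 m, IsMaxSpanningForest (G \ ⨆ j ∈ Finset.Icc 1 (i - 1), F j) (F i)

section AuxMSFD

open SimpleGraph Walk


lemma acyclic_ncard_le {V : Type*} [Fintype V] {G : SimpleGraph V} (hG : G.IsAcyclic) :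
    G.edgeSet.ncard ≤ Fintype.card V - 1 := by
  classical
  rcases isEmpty_or_nonempty V with hV | hV
  · have : G.edgeSet = ∅ := by
      ext e
      refine e.ind (fun a b => ?_)
      exact iff_of_false (fun h => hV.false a) (fun h => h.elim)
    simp [this]
  set r : V → V := fun v => (G.connectedComponentMk v).out with hrdef
  have hreq : ∀ {u v : V}, G.Reachable u v → r u = r v := by
    intro u v huv
    show ((G.connectedComponentMk u).out) = ((G.connectedComponentMk v).out)
    rw [SimpleGraph.ConnectedComponent.eq.mpr huv]
  have hr : ∀ v, G.Reachable v (r v) := fun v =>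
    (SimpleGraph.ConnectedComponent.eq.mp ((G.connectedComponentMk v).out_eq)).symm
  have hrr : ∀ v, r (r v) = r v := fun v => (hreq (hr v)).symm
  have huniq : ∀ {u v : V} (p q : G.Walk u v), p.IsPath → q.IsPath → p = q := by
    intro u v p q hp hq
    exact congrArg Subtype.val (hG.path_unique ⟨p, hp⟩ ⟨q, hq⟩)
  set f : ∀ v : V, G.Walk v (r v) := fun v => ((hr v).some.toPath : G.Path v (r v)).val with hfdef
  have hfp : ∀ v, (f v).IsPath := fun v => ((hr v).some.toPath).property
  set g : V → Sym2 V := fun w =>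
    if h : w = r w then s(w, w) else ((f w).firstDart (not_nil_of_ne h)).edge with hgdef
  have hsurj : Set.SurjOn g ↑(Finset.univ.filter fun v : V => v ≠ r v) ↑G.edgeFinset := by
    rintro e he
    simp only [Finset.mem_coe, mem_edgeFinset] at he
    induction e with
    | _ x y =>
    rw [SimpleGraph.mem_edgeSet] at he
    clear hV
    wlog hlen : (f x).length ≤ (f y).length generalizing x y
    · rw [Sym2.eq_swap]
      exact this y x he.symm (le_of_not_ge hlen)
    have rxy : r x = r y := hreq he.reachable
    have hyr : y ≠ r y := by
      intro h
      have h0 : (f y).length = 0 := by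
        have := huniq ((Walk.nil' y).copy rfl h) (f y) (by simp) (hfp y)
        rw [← this]; simp
      have h1 : (f x).length = 1 := by
        have hc : y = r x := by rw [rxy, ← h]
        have := huniq ((Walk.cons he Walk.nil).copy rfl hc) (f x)
          (by simp [he.ne]) (hfp x)
        rw [← this]; simp
      omega
    have key : f y = (Walk.cons he.symm (f x)).copy rfl (by rw [rxy]) := by
      by_cases hy : y ∈ (f x).support
      · exfalso
        have ht := huniq ((f x).takeUntil y hy) (Walk.cons he Walk.nil)
          ((hfp x).takeUntil hy) (by simp [he.ne])
        have hs := take_spec (f x) hy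
        have hlen2 : (f x).length = 1 + ((f x).dropUntil y hy).length := by
          conv_lhs => rw [← hs]
          rw [length_append, ht]
          simp
        have hd := huniq (((f x).dropUntil y hy).copy rfl rxy) (f y)
          (by simp [(hfp x).dropUntil hy]) (hfp y)
        have : (f y).length = ((f x).dropUntil y hy).length := by
          rw [← hd]; simp
        omega
      · refine huniq (f y) _ (hfp y) ?_
        simp [Walk.cons_isPath_iff, hfp x, hy]
    refine ⟨y, ?_, ?_⟩
    · simp [hyr]
    · rw [hgdef]
      simp only [dif_neg hyr]
      rw [edge_firstDart, key]
      simp [Sym2.eq_swap]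
  have hcard : G.edgeFinset.card ≤ (Finset.univ.filter fun v : V => v ≠ r v).card :=
    Finset.card_le_card_of_surjOn g hsurj
  have hsub : (Finset.univ.filter fun v : V => v ≠ r v) ⊆
      Finset.univ.erase (r (Classical.arbitrary V)) := by
    intro v hv
    simp only [Finset.mem_filter] at hv
    refine Finset.mem_erase.mpr ⟨?_, Finset.mem_univ v⟩
    intro h
    exact hv.2 (by rw [h, hrr])
  have : G.edgeSet.ncard = G.edgeFinset.card := by
    rw [Set.ncard_eq_toFinset_card']
    congr 1
  rw [this]
  calc G.edgeFinset.card ≤ _ := hcard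
    _ ≤ (Finset.univ.erase (r (Classical.arbitrary V))).card := Finset.card_le_card hsub
    _ = Fintype.card V - 1 := by rw [Finset.card_erase_of_mem (Finset.mem_univ _)]; simp


lemma sup_edge_ncard_le {V : Type*} [Fintype V] (s : Finset ℕ) (F : ℕ → SimpleGraph V) (c : ℕ)
    (h : ∀ i ∈ s, (F i).edgeSet.ncard ≤ c) :
    (⨆ i ∈ s, F i).edgeSet.ncard ≤ s.card * c := by
  classical
  induction s using Finset.induction with
  | empty => simp
  | @insert a s ha ih =>
    rw [Finset.iSup_insert, SimpleGraph.edgeSet_sup]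
    calc ((F a).edgeSet ∪ (⨆ i ∈ s, F i).edgeSet).ncard
        ≤ (F a).edgeSet.ncard + (⨆ i ∈ s, F i).edgeSet.ncard :=
          Set.ncard_union_le _ _
      _ ≤ c + s.card * c := by
          gcongr
          · exact h a (Finset.mem_insert_self a s)
          · exact ih fun i hi => h i (Finset.mem_insert_of_mem hi)
      _ = (insert a s).card * c := by
          rw [Finset.card_insert_of_notMem ha, add_mul, one_mul, Nat.add_comm]


/-- If `F 1, …, F m` is an msfd of order `m` of `G` on `n` vertices, `1 ≤ k ≤ m` and
`G_k = F 1 ∪ … ∪ F k`, then `G_k` is a sparse `k`-connectivity certificate of `G`: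
(1) `G_k` has at most `k(n-1)` edges, and (2) for every nonempty proper subset `S`
with `λ(S,G) ≤ k`, every edge of `G` crossing `(S, Sᶜ)` is an edge of `G_k`. -/
theorem msfd_sparse_certificate {V : Type*} [Fintype V] (G : SimpleGraph V) (m : ℕ)
    (F : ℕ → SimpleGraph V) (hF : IsMSFD G m F) (k : ℕ) (hk1 : 1 ≤ k) (hkm : k ≤ m) :
    (⨆ i ∈ Finset.Icc 1 k, F i).edgeSet.ncard ≤ k * (Fintype.card V - 1) ∧
    ∀ S : Set V, S.Nonempty → Sᶜ.Nonempty → cutSize G S ≤ k →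
      ∀ e ∈ G.edgeSet, (∃ u ∈ S, ∃ v ∈ Sᶜ, e = s(u, v)) →
        e ∈ (⨆ i ∈ Finset.Icc 1 k, F i).edgeSet := by
  classical
  obtain ⟨hsup, hdisj, hmax⟩ := hF
  have hIcc : Finset.Icc 1 k ⊆ Finset.Icc 1 m := Finset.Icc_subset_Icc_right hkm
  have hFle : ∀ i ∈ Finset.Icc 1 m, F i ≤ G := by
    intro i hi
    rw [← hsup]
    exact le_biSup F hi
  constructor
  · have h1 : ∀ i ∈ Finset.Icc 1 k, (F i).edgeSet.ncard ≤ Fintype.card V - 1 := by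
      intro i hi
      exact acyclic_ncard_le (hmax i (hIcc hi)).2.1
    have := sup_edge_ncard_le (Finset.Icc 1 k) F (Fintype.card V - 1) h1
    simpa using this
  · intro S hS hSc hcut e he hecross
    by_contra hnot
    obtain ⟨u, hu, v, hv, rfl⟩ := hecross
    rw [SimpleGraph.mem_edgeSet] at he
    -- each F i, 1 ≤ i ≤ k, contains an edge crossing (S, Sᶜ)
    have key : ∀ i ∈ Finset.Icc 1 k, ∃ a ∈ S, ∃ b ∈ Sᶜ,
        s(a, b) ∈ (F i).edgeSet := by
      intro i hi
      have hmaxi := hmax i (hIcc hi)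
      have hadj2 : (G \ ⨆ j ∈ Finset.Icc 1 (i - 1), F j).Adj u v := by
        rw [SimpleGraph.sdiff_adj]
        refine ⟨he, fun hcon => hnot ?_⟩
        rw [SimpleGraph.mem_edgeSet]
        have hle : (⨆ j ∈ Finset.Icc 1 (i - 1), F j) ≤ ⨆ j ∈ Finset.Icc 1 k, F j := by
          refine biSup_mono fun j hj => ?_
          have hik : i ≤ k := (Finset.mem_Icc.mp hi).2
          have := Finset.mem_Icc.mp hj
          exact Finset.mem_Icc.mpr ⟨this.1, le_trans this.2 (le_trans (Nat.sub_le i 1) hik)⟩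
        exact hle hcon
      obtain ⟨p⟩ := hmaxi.2.2 u v hadj2
      obtain ⟨d, hd, hdS, hdS'⟩ := p.exists_boundary_dart S hu hv
      refine ⟨d.fst, hdS, d.snd, hdS', ?_⟩
      have : d.edge ∈ p.edges := List.mem_map_of_mem (f := Dart.edge) hd
      exact p.edges_subset_edgeSet this
    choose a ha b hb hmem using key
    set t : Finset (Sym2 V) :=
      insert s(u, v) ((Finset.Icc 1 k).attach.image
        (fun i => s(a i.1 i.2, b i.1 i.2))) with htdef
    have hinj : Function.Injective
        (fun i : {x // x ∈ Finset.Icc 1 k} => s(a i.1 i.2, b i.1 i.2)) := by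
      rintro ⟨i, hi⟩ ⟨j, hj⟩ hij
      simp only [Subtype.mk.injEq]
      by_contra hne
      have hdiff := hdisj i (hIcc hi) j (hIcc hj) hne
      rw [← SimpleGraph.disjoint_edgeSet] at hdiff
      have hij' : s(a i hi, b i hi) = s(a j hj, b j hj) := hij
      have := hmem j hj
      rw [← hij'] at this
      exact (Set.disjoint_left.mp hdiff (hmem i hi)) this
    have himg : ∀ i (hi : i ∈ Finset.Icc 1 k),
        s(a i hi, b i hi) ∈ (⨆ j ∈ Finset.Icc 1 k, F j).edgeSet := by
      intro i hi
      have : F i ≤ ⨆ j ∈ Finset.Icc 1 k, F j := le_biSup F hi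
      exact SimpleGraph.edgeSet_mono this (hmem i hi)
    have hnotmem : s(u, v) ∉ (Finset.Icc 1 k).attach.image
        (fun i => s(a i.1 i.2, b i.1 i.2)) := by
      intro hcon
      obtain ⟨i, _, hi2⟩ := Finset.mem_image.mp hcon
      exact hnot (hi2 ▸ himg i.1 i.2)
    have hcardt : t.card = k + 1 := by
      rw [htdef, Finset.card_insert_of_notMem hnotmem,
        Finset.card_image_of_injective _ hinj, Finset.card_attach, Nat.card_Icc]
      simp
    have hsubT : (↑t : Set (Sym2 V)) ⊆
        {e ∈ G.edgeSet | ∃ x ∈ S, ∃ y ∈ Sᶜ, e = s(x, y)} := by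
      intro e het
      simp only [htdef, Finset.coe_insert, Set.mem_insert_iff, Finset.coe_image,
        Set.mem_image, Finset.mem_coe, Finset.mem_attach] at het
      rcases het with rfl | ⟨i, _, rfl⟩
      · exact ⟨he, u, hu, v, hv, rfl⟩
      · exact ⟨SimpleGraph.edgeSet_mono (hFle i.1 (hIcc i.2)) (hmem i.1 i.2),
          a i.1 i.2, ha i.1 i.2, b i.1 i.2, hb i.1 i.2, rfl⟩
    have : k + 1 ≤ cutSize G S := by
      rw [cutSize, ← hcardt, ← Set.ncard_coe_finset]
      exact Set.ncard_le_ncard hsubT (Set.toFinite _)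
    omega

end AuxMSFD
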